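/- Let a_1 ≥ ... ≥ a_{m} and d_1 ≥ ... ≥ d_{n} be positive integers. Define indices r_1 = max{ j ≤ n : d_j > a_1 }, s_1 = max{ i ≤ m : d_{r_1+1} ≤ a_i }, and inductively r_l = max{ j ≤ n : d_j > a_{s_{l-1}+1} }, s_l = max{ i ≤ m : d_{r_l+1} ≤ a_i }, terminating with r_t = n (with the convention that undefined maxima are 0). Let Φ be the block matrix (Φ_{ij}) over a rational function field, where Φ_{ij} is the a_i × d_j lower triangular banded Toeplitz matrix with generic (pairwise distinct indeterminate) entries x^{ij}_1,...,x^{ij}_{a_i-d_j+1} repeated along diagonals when a_i ≥ d_j, and Φ_{ij} = 0 when a_i < d_j. Then rank Φ = min over 0 ≤ i ≤ t-1 of ( a_1 + ... + a_{s_i} + d_{r_{i+1}+1} + ... + d_{r_t} ). -/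

import Mathlib

set_option linter.unusedSectionVars false

open Matrix

/-- The generic homomorphism matrix `φ^{PP2}` between preprojective Kronecker
representations: block `(i,j)` has size `a (i+1) × d (j+1)` (indices are 1-based via
`a, d : ℕ → ℕ`), and is the lower triangular banded Toeplitz matrix with generic
entries `x^{ij}_{u-v+1}` (variable index `((i,j), u-v)`, constant along diagonals)
when `a (i+1) ≥ d (j+1)`, and zero otherwise. -/
noncomputable def genPP2 (K : Type*) [Field K] (m n : ℕ) (a d : ℕ → ℕ) :
    Matrix (Σ i : Fin m, Fin (a (i.1 + 1))) (Σ j : Fin n, Fin (d (j.1 + 1)))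
      (FractionRing (MvPolynomial ((Fin m × Fin n) × ℕ) K)) :=
  fun x y =>
    if d (y.1.1 + 1) ≤ a (x.1.1 + 1) ∧ (y.2 : ℕ) ≤ (x.2 : ℕ) ∧
        (x.2 : ℕ) - (y.2 : ℕ) ≤ a (x.1.1 + 1) - d (y.1.1 + 1) then
      algebraMap (MvPolynomial ((Fin m × Fin n) × ℕ) K) _
        (MvPolynomial.X ((x.1, y.1), (x.2 : ℕ) - (y.2 : ℕ)))
    else 0


namespace KroneckerCore

noncomputable def blkOf (cap : ℕ → ℕ) (p : ℕ) : ℕ :=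
  letI := Classical.dec (∃ i, p ≤ cap i)
  if h : ∃ i, p ≤ cap i then Nat.find h else 0

section blk
variable {cap : ℕ → ℕ} (hmono : Monotone cap) (h0 : cap 0 = 0)

lemma blkOf_def {p : ℕ} (h : ∃ i, p ≤ cap i) :
    p ≤ cap (blkOf cap p) ∧ ∀ j, p ≤ cap j → blkOf cap p ≤ j := by
  rw [blkOf]
  split
  · next h' => exact ⟨Nat.find_spec h', fun j hj => Nat.find_le hj⟩
  · next h' => exact absurd h h'

lemma blkOf_spec {p P : ℕ} (hP : p ≤ cap P) : p ≤ cap (blkOf cap p) :=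
  (blkOf_def ⟨P, hP⟩).1

lemma blkOf_le {p P : ℕ} (hP : p ≤ cap P) : blkOf cap p ≤ P :=
  (blkOf_def ⟨P, hP⟩).2 P hP

omit hmono in
include h0 in
lemma blkOf_pos {p P : ℕ} (hp : 1 ≤ p) (hP : p ≤ cap P) : 1 ≤ blkOf cap p := by
  rcases Nat.eq_zero_or_pos (blkOf cap p) with h | h
  · have := blkOf_spec hP (p := p)
    rw [h, h0] at this; omega
  · exact h

include hmono h0 in
lemma blkOf_pred_lt {p P : ℕ} (hp : 1 ≤ p) (hP : p ≤ cap P) : cap (blkOf cap p - 1) < p := by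
  classical
  by_contra hc
  push_neg at hc
  have h1 : blkOf cap p ≤ blkOf cap p - 1 := blkOf_le hc
  have h2 : 1 ≤ blkOf cap p := blkOf_pos h0 hp hP
  omega

omit h0 in
include hmono in
lemma blkOf_eq {p i P : ℕ} (hP : p ≤ cap P) (hi : 1 ≤ i) (h1 : cap (i-1) < p) (h2 : p ≤ cap i) :
    blkOf cap p = i := by
  have hle : blkOf cap p ≤ i := blkOf_le h2
  have hsp := blkOf_spec (cap := cap) (p := p) hP
  by_contra hne
  have : blkOf cap p ≤ i - 1 := by omega
  have := hmono this
  omega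

omit hmono h0 in
lemma blkOf_mono {p p' P : ℕ} (hpp : p ≤ p') (hP : p' ≤ cap P) : blkOf cap p ≤ blkOf cap p' := by
  exact blkOf_le (le_trans hpp (blkOf_spec hP))

end blk

section core
variable (capA capD : ℕ → ℕ) (T : ℕ)

noncomputable def i0 (q : ℕ) : ℕ := blkOf capA (capD (q-1) + 1)

noncomputable def ovf (q : ℕ) : ℕ := capD q - capA (i0 capA capD q)

noncomputable def vOf (p : ℕ) : ℕ :=
  if p ≤ capA (i0 capA capD (blkOf capD p)) then
    p - capD (blkOf capD p - 1) + ovf capA capD (blkOf capD p)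
  else p - capA (i0 capA capD (blkOf capD p))

noncomputable def so (i q : ℕ) : ℕ :=
  if i = i0 capA capD q then capD (q-1) - (capA (i-1) + ovf capA capD q) else 0

def used (i q : ℕ) : Prop := ∃ p, 1 ≤ p ∧ p ≤ T ∧ blkOf capA p = i ∧ blkOf capD p = q

noncomputable def ordC (p : ℕ) : ℕ :=
  if 0 < ovf capA capD (blkOf capD p) ∧ p ≤ capA (i0 capA capD (blkOf capD p)) then
    2*T + (T - p)
  else p

variable {capA capD T}
variable {P Q : ℕ}
variable (hmA : Monotone capA) (hmD : Monotone capD) (h0A : capA 0 = 0) (h0D : capD 0 = 0)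
  (hTA : T ≤ capA P) (hTD : T ≤ capD Q)
  (hinc : ∀ i q, 1 ≤ i → i ≤ P → 1 ≤ q → q ≤ Q → capD (q-1) < T →
    capD (q-1) < capA i → capA (i-1) < capD q →
    capD q - capD (q-1) ≤ capA i - capA (i-1))

-- basic position facts
include hmA hmD h0A h0D hTA hTD in
lemma corePos {p : ℕ} (hp1 : 1 ≤ p) (hpT : p ≤ T) :
    1 ≤ blkOf capA p ∧ blkOf capA p ≤ P ∧ 1 ≤ blkOf capD p ∧ blkOf capD p ≤ Q ∧
    capA (blkOf capA p - 1) < p ∧ p ≤ capA (blkOf capA p) ∧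
    capD (blkOf capD p - 1) < p ∧ p ≤ capD (blkOf capD p) := by
  have hA : p ≤ capA P := le_trans hpT hTA
  have hD : p ≤ capD Q := le_trans hpT hTD
  exact ⟨blkOf_pos h0A hp1 hA, blkOf_le hA, blkOf_pos h0D hp1 hD, blkOf_le hD,
    blkOf_pred_lt hmA h0A hp1 hA, blkOf_spec hA,
    blkOf_pred_lt hmD h0D hp1 hD, blkOf_spec hD⟩

-- facts about i0 for the block of a used position
include hmA hmD h0A h0D hTA hTD in
lemma core_i0 {p : ℕ} (hp1 : 1 ≤ p) (hpT : p ≤ T) :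
    1 ≤ i0 capA capD (blkOf capD p) ∧ i0 capA capD (blkOf capD p) ≤ P ∧
    capA (i0 capA capD (blkOf capD p) - 1) ≤ capD (blkOf capD p - 1) ∧
    capD (blkOf capD p - 1) < capA (i0 capA capD (blkOf capD p)) := by
  obtain ⟨-, -, -, -, -, -, hC, hD⟩ := corePos hmA hmD h0A h0D hTA hTD hp1 hpT
  have hCp : capD (blkOf capD p - 1) + 1 ≤ capA P := by
    have : p ≤ capA P := le_trans hpT hTA
    omega
  refine ⟨blkOf_pos h0A (by omega) hCp, blkOf_le hCp, ?_, ?_⟩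
  · have := blkOf_pred_lt hmA h0A (p := capD (blkOf capD p - 1) + 1) (by omega) hCp
    rw [i0]; omega
  · have := blkOf_spec (cap := capA) (p := capD (blkOf capD p - 1) + 1) hCp
    rw [i0]; omega

lemma ovf_eq (q : ℕ) : ovf capA capD q = capD q - capA (i0 capA capD q) := rfl

-- band facts for the matched pair at position p
include hmA hmD h0A h0D hTA hTD hinc in
lemma coreBand {p : ℕ} (hp1 : 1 ≤ p) (hpT : p ≤ T) :
    capD (blkOf capD p) - capD (blkOf capD p - 1)
      ≤ capA (blkOf capA p) - capA (blkOf capA p - 1) ∧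
    1 ≤ vOf capA capD p ∧
    vOf capA capD p + capD (blkOf capD p - 1) ≤ capD (blkOf capD p) ∧
    capA (blkOf capA p - 1) + vOf capA capD p
      + so capA capD (blkOf capA p) (blkOf capD p) = p ∧
    so capA capD (blkOf capA p) (blkOf capD p)
      + (capD (blkOf capD p) - capD (blkOf capD p - 1))
      ≤ capA (blkOf capA p) - capA (blkOf capA p - 1) := by
  obtain ⟨hA1, hAP, hD1, hDQ, hAl, hAu, hDl, hDu⟩ := corePos hmA hmD h0A h0D hTA hTD hp1 hpT
  obtain ⟨hi01, hi0P, hi0l, hi0u⟩ := core_i0 hmA hmD h0A h0D hTA hTD hp1 hpT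
  by_cases hc : p ≤ capA (i0 capA capD (blkOf capD p))
  · have hieq : blkOf capA p = i0 capA capD (blkOf capD p) :=
      blkOf_eq hmA (le_trans hpT hTA) hi01 (by omega) hc
    have hDA : capD (blkOf capD p) - capD (blkOf capD p - 1)
        ≤ capA (i0 capA capD (blkOf capD p)) - capA (i0 capA capD (blkOf capD p) - 1) :=
      hinc _ _ hi01 hi0P hD1 hDQ (by omega) (by omega) (by omega)
    have hvOf : vOf capA capD p = p - capD (blkOf capD p - 1)
        + (capD (blkOf capD p) - capA (i0 capA capD (blkOf capD p))) := by
      rw [vOf, if_pos hc, ovf_eq]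
    have hso : so capA capD (blkOf capA p) (blkOf capD p)
        = capD (blkOf capD p - 1) - (capA (blkOf capA p - 1)
          + (capD (blkOf capD p) - capA (i0 capA capD (blkOf capD p)))) := by
      rw [so, if_pos hieq, ovf_eq, hieq]
    rw [hvOf, hso, hieq]
    omega
  · push_neg at hc
    have hi0P' : i0 capA capD (blkOf capD p) < P := by
      by_contra hcon
      have : capA P ≤ capA (i0 capA capD (blkOf capD p)) := hmA (by omega)
      have : p ≤ capA P := le_trans hpT hTA
      omega
    have hstep : capA (i0 capA capD (blkOf capD p)) ≤ capA (i0 capA capD (blkOf capD p) + 1) :=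
      hmA (by omega)
    have hDA : capD (blkOf capD p) - capD (blkOf capD p - 1)
        ≤ capA (i0 capA capD (blkOf capD p) + 1) - capA (i0 capA capD (blkOf capD p) + 1 - 1) := by
      refine hinc _ _ (by omega) (by omega) hD1 hDQ (by omega) (by omega) ?_
      simp only [Nat.add_sub_cancel]
      omega
    have hieq : blkOf capA p = i0 capA capD (blkOf capD p) + 1 := by
      refine blkOf_eq hmA (le_trans hpT hTA) (by omega) ?_ ?_
      · simpa using hc
      · simp only [Nat.add_sub_cancel] at hDA; omega
    have hvOf : vOf capA capD p = p - capA (i0 capA capD (blkOf capD p)) := by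
      rw [vOf, if_neg (by omega)]
    have hso : so capA capD (blkOf capA p) (blkOf capD p) = 0 := by
      rw [so, if_neg (by omega)]
    rw [hvOf, hso, hieq]
    simp only [Nat.add_sub_cancel] at hDA ⊢
    omega

-- injectivity of the column assignment
include hmA hmD h0A h0D hTA hTD in
lemma coreInj {p p' : ℕ} (hp1 : 1 ≤ p) (hpT : p ≤ T) (hp'1 : 1 ≤ p') (hp'T : p' ≤ T)
    (hqeq : blkOf capD p = blkOf capD p') (hveq : vOf capA capD p = vOf capA capD p') :
    p = p' := by
  obtain ⟨hA1, hAP, hD1, hDQ, hAl, hAu, hDl, hDu⟩ := corePos hmA hmD h0A h0D hTA hTD hp1 hpT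
  obtain ⟨hA1', hAP', hD1', hDQ', hAl', hAu', hDl', hDu'⟩ :=
    corePos hmA hmD h0A h0D hTA hTD hp'1 hp'T
  obtain ⟨hi01, hi0P, hi0l, hi0u⟩ := core_i0 hmA hmD h0A h0D hTA hTD hp1 hpT
  rw [vOf, vOf, hqeq] at hveq
  rw [hqeq] at hDl hDu
  rw [ovf_eq] at hveq
  by_cases h1 : p ≤ capA (i0 capA capD (blkOf capD p'))
    <;> by_cases h2 : p' ≤ capA (i0 capA capD (blkOf capD p'))
    <;> [rw [if_pos h1, if_pos h2] at hveq; rw [if_pos h1, if_neg h2] at hveq;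
        rw [if_neg h1, if_pos h2] at hveq; rw [if_neg h1, if_neg h2] at hveq]
    <;> omega


-- triangularity: a nonzero specialized entry at (row of p, column of p') forces p = p'
-- or ord p < ord p'
include hmA hmD h0A h0D hTA hTD hinc in
lemma coreTri {p p' : ℕ} (hp1 : 1 ≤ p) (hpT : p ≤ T) (hp'1 : 1 ≤ p') (hp'T : p' ≤ T)
    (hused : used capA capD T (blkOf capA p) (blkOf capD p'))
    (heq : capA (blkOf capA p - 1) + vOf capA capD p'
      + so capA capD (blkOf capA p) (blkOf capD p') = p) :
    p = p' ∨ ordC capA capD T p < ordC capA capD T p' := by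
  obtain ⟨hA1, hAP, hD1, hDQ, hAl, hAu, hDl, hDu⟩ := corePos hmA hmD h0A h0D hTA hTD hp1 hpT
  obtain ⟨hA1', hAP', hD1', hDQ', hAl', hAu', hDl', hDu'⟩ :=
    corePos hmA hmD h0A h0D hTA hTD hp'1 hp'T
  obtain ⟨hi01, hi0P, hi0l, hi0u⟩ := core_i0 hmA hmD h0A h0D hTA hTD hp'1 hp'T
  by_cases hii : blkOf capA p = i0 capA capD (blkOf capD p')
  · -- row block of p is the first block of p''s column block
    rw [so, if_pos hii, ovf_eq, hii] at heq
    by_cases hovf0 : capD (blkOf capD p') ≤ capA (i0 capA capD (blkOf capD p'))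
    · -- no overflow: p' is in part 1, conclude p = p'
      have hp'X : p' ≤ capA (i0 capA capD (blkOf capD p')) := le_trans hDu' hovf0
      rw [vOf, if_pos hp'X, ovf_eq] at heq
      left; omega
    · push_neg at hovf0
      have hDA : capD (blkOf capD p') - capD (blkOf capD p' - 1)
          ≤ capA (i0 capA capD (blkOf capD p'))
            - capA (i0 capA capD (blkOf capD p') - 1) :=
        hinc _ _ hi01 hi0P hD1' hDQ' (by omega) (by omega) (by omega)
      by_cases hp'X : p' ≤ capA (i0 capA capD (blkOf capD p'))
      · rw [vOf, if_pos hp'X, ovf_eq] at heq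
        left; omega
      · -- accidental entry: p in an earlier column block, p' in part 2 (phase 1)
        push_neg at hp'X
        rw [vOf, if_neg (by omega)] at heq
        right
        have hpC : p ≤ capD (blkOf capD p' - 1) := by omega
        have hqp : blkOf capD p ≤ blkOf capD p' - 1 := blkOf_le hpC
        have hphase1 : ¬(0 < ovf capA capD (blkOf capD p)
            ∧ p ≤ capA (i0 capA capD (blkOf capD p))) := by
          rintro ⟨hov, hpX⟩
          rw [ovf_eq] at hov
          have hile : i0 capA capD (blkOf capD p) ≤ blkOf capA p := by
            rw [i0]
            exact blkOf_mono (by omega) (le_trans hpT hTA)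
          rcases Nat.lt_or_ge (i0 capA capD (blkOf capD p)) (blkOf capA p) with hlt | hge
          · have : capA (i0 capA capD (blkOf capD p)) ≤ capA (blkOf capA p - 1) :=
              hmA (by omega)
            omega
          · have hieq2 : i0 capA capD (blkOf capD p) = blkOf capA p := by omega
            have : capD (blkOf capD p) ≤ capD (blkOf capD p' - 1) := hmD hqp
            rw [hieq2, hii] at hov
            omega
        rw [ordC, if_neg hphase1, ordC, if_neg (by rintro ⟨-, h⟩; omega)]
        omega
  · -- row block of p is the second block of p''s column block; uses `used`
    rw [so, if_neg hii] at heq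
    obtain ⟨p2, hp21, hp2T, hp2A, hp2D⟩ := hused
    obtain ⟨hA12, hAP2, hD12, hDQ2, hAl2, hAu2, hDl2, hDu2⟩ :=
      corePos hmA hmD h0A h0D hTA hTD hp21 hp2T
    rw [hp2A] at hAl2 hAu2
    rw [hp2D] at hDl2 hDu2
    have hile : i0 capA capD (blkOf capD p') ≤ blkOf capA p := by
      rw [i0]
      have := blkOf_mono (cap := capA) (p := capD (blkOf capD p' - 1) + 1) (p' := p2)
        (by omega) (le_trans hp2T hTA)
      omega
    have hXle : capA (i0 capA capD (blkOf capD p')) ≤ capA (blkOf capA p - 1) :=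
      hmA (by omega)
    have hovf : capA (i0 capA capD (blkOf capD p')) < capD (blkOf capD p') := by
      by_contra hcon
      push_neg at hcon
      have := blkOf_le (cap := capA) (p := p2) (le_trans hDu2 hcon)
      omega
    have hi0P' : i0 capA capD (blkOf capD p') < P := by
      by_contra hcon
      have h1 : capA P ≤ capA (i0 capA capD (blkOf capD p')) := hmA (by omega)
      have h2 : p2 ≤ capA P := le_trans hp2T hTA
      omega
    have hstep : capA (i0 capA capD (blkOf capD p'))
        ≤ capA (i0 capA capD (blkOf capD p') + 1) := hmA (by omega)
    have hDA : capD (blkOf capD p') - capD (blkOf capD p' - 1)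
        ≤ capA (i0 capA capD (blkOf capD p') + 1)
          - capA (i0 capA capD (blkOf capD p') + 1 - 1) := by
      refine hinc _ _ (by omega) (by omega) hD1' hDQ' (by omega) (by omega) ?_
      simp only [Nat.add_sub_cancel]
      omega
    simp only [Nat.add_sub_cancel] at hDA
    have hieq : blkOf capA p = i0 capA capD (blkOf capD p') + 1 := by
      have := blkOf_eq hmA (le_trans hp2T hTA) (i := i0 capA capD (blkOf capD p') + 1)
        (by omega) (by simp only [Nat.add_sub_cancel]; omega) (by omega)
      omega
    rw [hieq, Nat.add_sub_cancel] at heq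
    by_cases hp'X : p' ≤ capA (i0 capA capD (blkOf capD p'))
    · -- p' is a rotated (phase 2) pair, p comes strictly later
      rw [vOf, if_pos hp'X, ovf_eq] at heq
      right
      have hordp' : ordC capA capD T p' = 2*T + (T - p') := by
        rw [ordC, if_pos ⟨by rw [ovf_eq]; omega, hp'X⟩]
      rw [hordp', ordC]
      split
      · omega
      · omega
    · push_neg at hp'X
      rw [vOf, if_neg (by omega)] at heq
      left; omega

end core
end KroneckerCore

-- triangularity-by-weight determinant lemma
theorem det_eq_one_of_ord {K : Type*} [Field K] {N : ℕ} (M : Matrix (Fin N) (Fin N) K)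
    (w : Fin N → ℕ) (hdiag : ∀ k, M k k = 1)
    (hoff : ∀ k k', M k k' ≠ 0 → k = k' ∨ w k < w k') : M.det = 1 := by
  classical
  rw [Matrix.det_apply]
  have h1 : ∀ σ : Equiv.Perm (Fin N), σ ≠ 1 →
      (Equiv.Perm.sign σ) • ∏ k, M (σ k) k = 0 := by
    intro σ hσ
    by_contra h
    have hne : ∀ k, M (σ k) k ≠ 0 := by
      intro k hk
      have hz : ∏ k, M (σ k) k = 0 := Finset.prod_eq_zero (Finset.mem_univ k) hk
      rw [hz, smul_zero] at h
      exact h rfl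
    have hle : ∀ k, w (σ k) ≤ w k := by
      intro k
      rcases hoff _ _ (hne k) with h1 | h2
      · rw [h1]
      · omega
    obtain ⟨k0, hk0⟩ : ∃ k, σ k ≠ k := by
      by_contra hc
      push_neg at hc
      exact hσ (Equiv.ext fun x => hc x)
    have hlt : w (σ k0) < w k0 := by
      rcases hoff _ _ (hne k0) with h1 | h2
      · exact absurd h1 hk0
      · exact h2
    have : ∑ k, w (σ k) < ∑ k, w k :=
      Finset.sum_lt_sum (fun i _ => hle i) ⟨k0, Finset.mem_univ k0, hlt⟩
    rw [Equiv.sum_comp σ w] at this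
    omega
  rw [Finset.sum_eq_single (1 : Equiv.Perm (Fin N))]
  · simp [hdiag]
  · intro σ _ hσ; exact h1 σ hσ
  · intro h; exact absurd (Finset.mem_univ _) h


section plumbing
variable {F : Type*} [Field F] {ρ γ : Type*} [Fintype ρ] [Fintype γ]
  [DecidableEq ρ] [DecidableEq γ]

lemma rank_le_of_zero_block (M : Matrix ρ γ F) (Tr : Finset ρ) (S : Finset γ)
    (hz : ∀ x y, x ∉ Tr → y ∈ S → M x y = 0) : M.rank ≤ Tr.card + Sᶜ.card := by
  classical
  set X : Matrix ρ (↥Tr ⊕ ↥(Sᶜ)) F :=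
    fun x w => match w with
      | Sum.inl t => if x = ↑t then 1 else 0
      | Sum.inr c => M x ↑c
    with hX
  set Y : Matrix (↥Tr ⊕ ↥(Sᶜ)) γ F :=
    fun w y => match w with
      | Sum.inl t => if y ∈ S then M ↑t y else 0
      | Sum.inr c => if (↑c : γ) = y then 1 else 0
    with hY
  have hM : M = X * Y := by
    ext x y
    rw [Matrix.mul_apply, Fintype.sum_sum_type]
    by_cases hy : y ∈ S
    · have h2 : ∀ c : ↥(Sᶜ), X x (Sum.inr c) * Y (Sum.inr c) y = 0 := by
        intro c
        have : (↑c : γ) ≠ y := by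
          intro h; have := c.2; rw [h] at this; simp [Finset.mem_compl] at this; exact this hy
        simp [hX, hY, this]
      rw [Finset.sum_congr rfl (fun c _ => h2 c), Finset.sum_const_zero, add_zero]
      by_cases hx : x ∈ Tr
      · rw [Finset.sum_eq_single (⟨x, hx⟩ : ↥Tr)]
        · simp [hX, hY, hy]
        · intro b _ hb
          have : x ≠ ↑b := by
            intro h; apply hb; ext; simp [← h]
          simp [hX, hY, this]
        · intro h; exact absurd (Finset.mem_univ _) h
      · rw [Finset.sum_eq_zero, hz x y hx hy]
        intro b _
        have : x ≠ ↑b := by intro h; rw [h] at hx; exact hx b.2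
        simp [hX, hY, this]
    · have h1 : ∀ t : ↥Tr, X x (Sum.inl t) * Y (Sum.inl t) y = 0 := by
        intro t; simp [hX, hY, hy]
      rw [Finset.sum_congr rfl (fun t _ => h1 t), Finset.sum_const_zero, zero_add]
      have hyc : y ∈ Sᶜ := Finset.mem_compl.mpr hy
      rw [Finset.sum_eq_single (⟨y, hyc⟩ : ↥(Sᶜ))]
      · simp [hX, hY]
      · intro b _ hb
        have : (↑b : γ) ≠ y := by
          intro h; apply hb; ext; simp [h]
        simp [hX, hY, this]
      · intro h; exact absurd (Finset.mem_univ _) h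
  calc M.rank = (X * Y).rank := by rw [hM]
    _ ≤ X.rank := Matrix.rank_mul_le_left X Y
    _ ≤ Fintype.card (↥Tr ⊕ ↥(Sᶜ)) := Matrix.rank_le_card_width X
    _ = Tr.card + Sᶜ.card := by simp [Fintype.card_sum, Fintype.card_coe, Finset.card_compl]

lemma le_rank_of_submatrix_det {N : ℕ} (M : Matrix ρ γ F) (f : Fin N → ρ) (g : Fin N → γ)
    (h : (M.submatrix f g).det ≠ 0) : N ≤ M.rank := by
  classical
  set X : Matrix (Fin N) ρ F := fun k x => if x = f k then 1 else 0 with hX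
  set Y : Matrix γ (Fin N) F := fun y k => if y = g k then 1 else 0 with hY
  have hsub : M.submatrix f g = X * M * Y := by
    ext k k'
    rw [Matrix.mul_apply]
    have : ∀ y, (X * M) k y * Y y k' = if y = g k' then (X * M) k y else 0 := by
      intro y; by_cases h : y = g k' <;> simp [hY, h]
    rw [Finset.sum_congr rfl (fun y _ => this y), Finset.sum_ite_eq' Finset.univ (g k')]
    simp only [Finset.mem_univ, if_pos]
    rw [Matrix.mul_apply]
    have h2 : ∀ x, X k x * M x (g k') = if x = f k then M x (g k') else 0 := by
      intro x; by_cases h : x = f k <;> simp [hX, h]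
    rw [Finset.sum_congr rfl (fun x _ => h2 x), Finset.sum_ite_eq' Finset.univ (f k)]
    simp [Matrix.submatrix_apply]
  have hrk : (M.submatrix f g).rank = N := by
    rw [Matrix.rank_of_isUnit]
    · exact Fintype.card_fin N
    · rw [Matrix.isUnit_iff_isUnit_det]
      exact isUnit_iff_ne_zero.mpr h
  calc N = (M.submatrix f g).rank := hrk.symm
    _ = (X * M * Y).rank := by rw [hsub]
    _ ≤ (X * M).rank := Matrix.rank_mul_le_left _ _
    _ ≤ M.rank := Matrix.rank_mul_le_right _ _

end plumbing

noncomputable section lowerhelper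
open MvPolynomial

variable (K : Type*) [Field K] (m n : ℕ) (a d : ℕ → ℕ)

/-- evaluated band matrix -/
def bandE (σv : ((Fin m × Fin n) × ℕ) → K) :
    Matrix (Σ i : Fin m, Fin (a (i.1 + 1))) (Σ j : Fin n, Fin (d (j.1 + 1))) K :=
  fun x y =>
    if d (y.1.1 + 1) ≤ a (x.1.1 + 1) ∧ (y.2 : ℕ) ≤ (x.2 : ℕ) ∧
        (x.2 : ℕ) - (y.2 : ℕ) ≤ a (x.1.1 + 1) - d (y.1.1 + 1) then
      σv ((x.1, y.1), (x.2 : ℕ) - (y.2 : ℕ))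
    else 0

lemma genPP2_rank_ge {N : ℕ} (σv : ((Fin m × Fin n) × ℕ) → K)
    (row : Fin N → (Σ i : Fin m, Fin (a (i.1 + 1))))
    (col : Fin N → (Σ j : Fin n, Fin (d (j.1 + 1))))
    (w : Fin N → ℕ)
    (hdiag : ∀ k, bandE K m n a d σv (row k) (col k) = 1)
    (hoff : ∀ k k', bandE K m n a d σv (row k) (col k') ≠ 0 → k = k' ∨ w k < w k') :
    N ≤ (genPP2 K m n a d).rank := by
  classical
  set R := MvPolynomial ((Fin m × Fin n) × ℕ) K
  set F := FractionRing R
  set Ppoly : Matrix (Σ i : Fin m, Fin (a (i.1 + 1))) (Σ j : Fin n, Fin (d (j.1 + 1))) R :=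
    fun x y =>
      if d (y.1.1 + 1) ≤ a (x.1.1 + 1) ∧ (y.2 : ℕ) ≤ (x.2 : ℕ) ∧
          (x.2 : ℕ) - (y.2 : ℕ) ≤ a (x.1.1 + 1) - d (y.1.1 + 1) then
        (MvPolynomial.X ((x.1, y.1), (x.2 : ℕ) - (y.2 : ℕ)) : R)
      else 0 with hPpoly
  have hgen : genPP2 K m n a d = Ppoly.map (algebraMap R F) := by
    ext x y
    rw [genPP2, Matrix.map_apply, hPpoly]
    rw [apply_ite (algebraMap R F), map_zero]
  have hev : (Ppoly.submatrix row col).map (MvPolynomial.eval σv) =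
      fun k k' => bandE K m n a d σv (row k) (col k') := by
    ext k k'
    rw [Matrix.map_apply, Matrix.submatrix_apply, hPpoly, bandE]
    rw [apply_ite (MvPolynomial.eval σv), map_zero, MvPolynomial.eval_X]
  have hdet1 : (MvPolynomial.eval σv) (Ppoly.submatrix row col).det = 1 := by
    rw [RingHom.map_det, RingHom.mapMatrix_apply, hev]
    exact det_eq_one_of_ord _ w hdiag hoff
  have hdetne : (Ppoly.submatrix row col).det ≠ 0 := by
    intro h; rw [h, map_zero] at hdet1; exact zero_ne_one hdet1
  apply le_rank_of_submatrix_det (genPP2 K m n a d) row col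
  rw [hgen]
  have hsm : (Ppoly.map (algebraMap R F)).submatrix row col =
      (Ppoly.submatrix row col).map (algebraMap R F) := rfl
  rw [hsm]
  rw [show (Ppoly.submatrix row col).map (algebraMap R F)
    = (algebraMap R F).mapMatrix (Ppoly.submatrix row col) from rfl, ← RingHom.map_det]
  intro hc
  exact hdetne ((map_eq_zero_iff _ (IsFractionRing.injective R F)).mp hc)

end lowerhelper

section sums

lemma sum_range_eq_Ioc (f : ℕ → ℕ) (k : ℕ) :
    ∑ i ∈ Finset.range k, f (i+1) = ∑ j ∈ Finset.Ioc 0 k, f j := by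
  induction k with
  | zero => simp
  | succ k ih => rw [Finset.sum_range_succ, ih, Finset.sum_Ioc_succ_top (by omega)]

lemma sum_Ioc_le_sum_Ioc (f : ℕ → ℕ) {x y : ℕ} (h : x ≤ y) :
    ∑ j ∈ Finset.Ioc 0 x, f j ≤ ∑ j ∈ Finset.Ioc 0 y, f j :=
  Finset.sum_le_sum_of_subset (Finset.Ioc_subset_Ioc le_rfl h)

lemma sup_mem_of_pos {S : Finset ℕ} (h : 1 ≤ S.sup id) : S.sup id ∈ S := by
  rcases S.eq_empty_or_nonempty with rfl | hS
  · simp at h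
  · obtain ⟨b, hb, he⟩ := Finset.exists_mem_eq_sup S hS id
    rw [he]; exact hb

lemma sum_range_ite_ge (g : ℕ → ℕ) (rr n : ℕ) (h : rr ≤ n) :
    ∑ i ∈ Finset.range n, (if rr ≤ i then g (i+1) else 0) = ∑ j ∈ Finset.Ioc rr n, g j := by
  induction n with
  | zero =>
    have h0 : rr = 0 := by omega
    simp [h0]
  | succ n ih =>
    by_cases h2 : rr ≤ n
    · rw [Finset.sum_range_succ, ih h2, if_pos h2, Finset.sum_Ioc_succ_top h2]
    · have he : rr = n + 1 := by omega
      rw [Finset.sum_eq_zero, he, Finset.Ioc_self, Finset.sum_empty]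
      intro i hi
      rw [if_neg]
      have := Finset.mem_range.1 hi
      omega

lemma sum_range_ite_lt (g : ℕ → ℕ) (sl n : ℕ) (h : sl ≤ n) :
    ∑ i ∈ Finset.range n, (if i < sl then g (i+1) else 0) = ∑ j ∈ Finset.Ioc 0 sl, g j := by
  induction n with
  | zero =>
    have h0 : sl = 0 := by omega
    simp [h0]
  | succ n ih =>
    by_cases h2 : sl ≤ n
    · rw [Finset.sum_range_succ, ih h2, if_neg (by omega), add_zero]
    · have he : sl = n + 1 := by omega
      subst he
      rw [← sum_range_eq_Ioc]
      apply Finset.sum_congr rfl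
      intro i hi
      rw [if_pos]
      have := Finset.mem_range.1 hi
      omega

end sums

section upper
open Matrix
variable (K : Type*) [Field K] (m n : ℕ) (a d : ℕ → ℕ)

lemma genPP2_rank_le (sl rr : ℕ) (hsl : sl ≤ m) (hrr : rr ≤ n)
    (hz : ∀ I J : ℕ, sl < I → I ≤ m → 1 ≤ J → J ≤ rr → a I < d J) :
    (genPP2 K m n a d).rank ≤ (∑ j ∈ Finset.Ioc 0 sl, a j) + ∑ j ∈ Finset.Ioc rr n, d j := by
  classical
  set M := genPP2 K m n a d with hM
  set W := (Σ i : {i : Fin m // i.1 < sl}, Fin (a (i.1.1 + 1)))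
    ⊕ (Σ j : {j : Fin n // rr ≤ j.1}, Fin (d (j.1.1 + 1))) with hW
  set rowEmb : (Σ i : {i : Fin m // i.1 < sl}, Fin (a (i.1.1 + 1)))
      → (Σ i : Fin m, Fin (a (i.1 + 1))) := fun t => ⟨t.1.1, t.2⟩ with hrowEmb
  set colEmb : (Σ j : {j : Fin n // rr ≤ j.1}, Fin (d (j.1.1 + 1)))
      → (Σ j : Fin n, Fin (d (j.1 + 1))) := fun c => ⟨c.1.1, c.2⟩ with hcolEmb
  set X : Matrix (Σ i : Fin m, Fin (a (i.1 + 1))) W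
      (FractionRing (MvPolynomial ((Fin m × Fin n) × ℕ) K)) :=
    fun x w => match w with
      | Sum.inl t => if x = rowEmb t then 1 else 0
      | Sum.inr c => M x (colEmb c)
    with hX
  set Y : Matrix W (Σ j : Fin n, Fin (d (j.1 + 1)))
      (FractionRing (MvPolynomial ((Fin m × Fin n) × ℕ) K)) :=
    fun w y => match w with
      | Sum.inl t => if y.1.1 + 1 ≤ rr then M (rowEmb t) y else 0
      | Sum.inr c => if colEmb c = y then 1 else 0
    with hY
  have hfact : M = X * Y := by
    ext x y
    rw [Matrix.mul_apply, Fintype.sum_sum_type]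
    by_cases hy : y.1.1 + 1 ≤ rr
    · have h2 : ∀ c, X x (Sum.inr c) * Y (Sum.inr c) y = 0 := by
        intro c
        have hne : colEmb c ≠ y := by
          intro h
          have h1 := c.1.2
          have h2 : ((colEmb c).1 : Fin n).1 = (y.1 : Fin n).1 := by rw [h]
          have h3 : ((colEmb c).1 : Fin n).1 = (c.1.1 : Fin n).1 := rfl
          omega
        simp [hX, hY, hne]
      rw [Finset.sum_congr rfl (fun c _ => h2 c), Finset.sum_const_zero, add_zero]
      by_cases hx : x.1.1 < sl
      · set t0 : (Σ i : {i : Fin m // i.1 < sl}, Fin (a (i.1.1 + 1))) := ⟨⟨x.1, hx⟩, x.2⟩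
          with ht0
        have hre : rowEmb t0 = x := rfl
        rw [Finset.sum_eq_single t0]
        · simp [hX, hY, hre, hy]; intro h; omega
        · intro b _ hb
          have hne : x ≠ rowEmb b := by
            intro h
            apply hb
            obtain ⟨⟨bi, hbi⟩, bs⟩ := b
            rw [hrowEmb] at h
            simp only at h
            rw [ht0]
            subst h
            rfl
          simp [hX, hY, hne]
        · intro h; exact absurd (Finset.mem_univ _) h
      · have hMxy : M x y = 0 := by
          rw [hM, genPP2, if_neg]
          rintro ⟨h1, -, -⟩
          have := hz (x.1.1 + 1) (y.1.1 + 1) (by omega) (by have := x.1.2; omega)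
            (by omega) hy
          omega
        rw [hMxy]
        symm
        apply Finset.sum_eq_zero
        intro b _
        have hne : x ≠ rowEmb b := by
          intro h
          have h1 := b.1.2
          have h2 : (x.1 : Fin m).1 = ((rowEmb b).1 : Fin m).1 := by rw [h]
          have h3 : ((rowEmb b).1 : Fin m).1 = (b.1.1 : Fin m).1 := rfl
          omega
        simp [hX, hne]
    · have h1 : ∀ t, X x (Sum.inl t) * Y (Sum.inl t) y = 0 := by
        intro t; simp [hY, hy]; intro h; omega
      rw [Finset.sum_congr rfl (fun t _ => h1 t), Finset.sum_const_zero, zero_add]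
      set c0 : (Σ j : {j : Fin n // rr ≤ j.1}, Fin (d (j.1.1 + 1))) := ⟨⟨y.1, by omega⟩, y.2⟩
        with hc0
      have hce : colEmb c0 = y := rfl
      rw [Finset.sum_eq_single c0]
      · simp [hX, hY, hce]
      · intro b _ hb
        have hne : colEmb b ≠ y := by
          intro h
          apply hb
          obtain ⟨⟨bi, hbi⟩, bs⟩ := b
          rw [hcolEmb] at h
          simp only at h
          rw [hc0]
          subst h
          rfl
        simp [hY, hne]
      · intro h; exact absurd (Finset.mem_univ _) h
  calc M.rank = (X * Y).rank := by rw [hfact]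
    _ ≤ X.rank := Matrix.rank_mul_le_left X Y
    _ ≤ Fintype.card W := Matrix.rank_le_card_width X
    _ ≤ _ := by
        have hcW : Fintype.card W =
            (∑ i : {i : Fin m // i.1 < sl}, a (i.1.1 + 1))
            + ∑ j : {j : Fin n // rr ≤ j.1}, d (j.1.1 + 1) := by
          show Fintype.card ((Σ i : {i : Fin m // i.1 < sl}, Fin (a (i.1.1 + 1)))
            ⊕ (Σ j : {j : Fin n // rr ≤ j.1}, Fin (d (j.1.1 + 1)))) = _
          rw [Fintype.card_sum, Fintype.card_sigma, Fintype.card_sigma]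
          simp
        rw [hcW]
        apply Nat.add_le_add
        · rw [← Finset.sum_subtype (Finset.univ.filter (fun i : Fin m => i.1 < sl))
            (by intro x; simp) (fun i : Fin m => a (i.1 + 1))]
          rw [Finset.sum_filter, Fin.sum_univ_eq_sum_range
            (fun i => if i < sl then a (i + 1) else 0) m]
          rw [sum_range_ite_lt a sl m hsl]
        · rw [← Finset.sum_subtype (Finset.univ.filter (fun j : Fin n => rr ≤ j.1))
            (by intro x; simp) (fun j : Fin n => d (j.1 + 1))]
          rw [Finset.sum_filter, Fin.sum_univ_eq_sum_range
            (fun i => if rr ≤ i then d (i + 1) else 0) n]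
          rw [sum_range_ite_ge d rr n hrr]

end upper

section lower
open KroneckerCore

variable (K : Type*) [Field K] (m n : ℕ) (a d : ℕ → ℕ)

set_option maxHeartbeats 1000000 in
lemma lower_main (sl rr T1 T2 Q1 : ℕ) (hsl : sl ≤ m) (hrr : rr ≤ n) (hQ1 : Q1 ≤ rr)
    (capA1 capD1 capA2 capD2 : ℕ → ℕ)
    (hmA1 : Monotone capA1) (hmD1 : Monotone capD1) (h0A1 : capA1 0 = 0) (h0D1 : capD1 0 = 0)
    (hTA1 : T1 ≤ capA1 sl) (hTD1 : T1 ≤ capD1 Q1)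
    (hinc1 : ∀ i q, 1 ≤ i → i ≤ sl → 1 ≤ q → q ≤ Q1 → capD1 (q-1) < T1 →
      capD1 (q-1) < capA1 i → capA1 (i-1) < capD1 q →
      capD1 q - capD1 (q-1) ≤ capA1 i - capA1 (i-1))
    (hmA2 : Monotone capA2) (hmD2 : Monotone capD2) (h0A2 : capA2 0 = 0) (h0D2 : capD2 0 = 0)
    (hTA2 : T2 ≤ capA2 (m - sl)) (hTD2 : T2 ≤ capD2 (n - rr))
    (hinc2 : ∀ i q, 1 ≤ i → i ≤ m - sl → 1 ≤ q → q ≤ n - rr → capD2 (q-1) < T2 →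
      capD2 (q-1) < capA2 i → capA2 (i-1) < capD2 q →
      capD2 q - capD2 (q-1) ≤ capA2 i - capA2 (i-1))
    (hszA1 : ∀ b, 1 ≤ b → b ≤ sl → capA1 b - capA1 (b-1) = a (sl - b + 1))
    (hszD1 : ∀ g, 1 ≤ g → g ≤ Q1 → capD1 g - capD1 (g-1) = d (rr - g + 1))
    (hszA2 : ∀ i, 1 ≤ i → i ≤ m - sl → capA2 i - capA2 (i-1) = a (sl + i))
    (hszD2 : ∀ q, 1 ≤ q → q ≤ n - rr → capD2 q - capD2 (q-1) = d (rr + q)) :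
    T1 + T2 ≤ (genPP2 K m n a d).rank := by
  classical
  -- bundled facts for a position p in part 1
  have F1 : ∀ p, 1 ≤ p → p ≤ T1 →
      (1 ≤ blkOf capA1 p ∧ blkOf capA1 p ≤ sl ∧ 1 ≤ blkOf capD1 p ∧ blkOf capD1 p ≤ Q1) ∧
      (capA1 (blkOf capA1 p - 1) < p ∧ p ≤ capA1 (blkOf capA1 p) ∧
        capD1 (blkOf capD1 p - 1) < p ∧ p ≤ capD1 (blkOf capD1 p)) ∧
      (d (rr - blkOf capD1 p + 1) ≤ a (sl - blkOf capA1 p + 1) ∧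
       1 ≤ vOf capA1 capD1 p ∧
       vOf capA1 capD1 p ≤ d (rr - blkOf capD1 p + 1) ∧
       vOf capA1 capD1 p + so capA1 capD1 (blkOf capA1 p) (blkOf capD1 p)
         = p - capA1 (blkOf capA1 p - 1) ∧
       so capA1 capD1 (blkOf capA1 p) (blkOf capD1 p) + d (rr - blkOf capD1 p + 1)
         ≤ a (sl - blkOf capA1 p + 1) ∧
       p - capA1 (blkOf capA1 p - 1) ≤ a (sl - blkOf capA1 p + 1)) := by
    intro p hp1 hpT
    obtain ⟨hA1, hAP, hD1, hDQ, hAl, hAu, hDl, hDu⟩ :=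
      corePos hmA1 hmD1 h0A1 h0D1 hTA1 hTD1 hp1 hpT
    obtain ⟨hd1, hv1, hv2, hadd, hso⟩ :=
      coreBand hmA1 hmD1 h0A1 h0D1 hTA1 hTD1 hinc1 hp1 hpT
    have e1 := hszA1 _ hA1 hAP
    have e2 := hszD1 _ hD1 hDQ
    exact ⟨⟨hA1, hAP, hD1, hDQ⟩, ⟨hAl, hAu, hDl, hDu⟩,
      by omega, by omega, by omega, by omega, by omega, by omega⟩
  have F2 : ∀ p, 1 ≤ p → p ≤ T2 →
      (1 ≤ blkOf capA2 p ∧ blkOf capA2 p ≤ m - sl ∧ 1 ≤ blkOf capD2 p ∧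
        blkOf capD2 p ≤ n - rr) ∧
      (capA2 (blkOf capA2 p - 1) < p ∧ p ≤ capA2 (blkOf capA2 p) ∧
        capD2 (blkOf capD2 p - 1) < p ∧ p ≤ capD2 (blkOf capD2 p)) ∧
      (d (rr + blkOf capD2 p) ≤ a (sl + blkOf capA2 p) ∧
       1 ≤ vOf capA2 capD2 p ∧
       vOf capA2 capD2 p ≤ d (rr + blkOf capD2 p) ∧
       vOf capA2 capD2 p + so capA2 capD2 (blkOf capA2 p) (blkOf capD2 p)
         = p - capA2 (blkOf capA2 p - 1) ∧
       so capA2 capD2 (blkOf capA2 p) (blkOf capD2 p) + d (rr + blkOf capD2 p)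
         ≤ a (sl + blkOf capA2 p) ∧
       p - capA2 (blkOf capA2 p - 1) ≤ a (sl + blkOf capA2 p)) := by
    intro p hp1 hpT
    obtain ⟨hA1, hAP, hD1, hDQ, hAl, hAu, hDl, hDu⟩ :=
      corePos hmA2 hmD2 h0A2 h0D2 hTA2 hTD2 hp1 hpT
    obtain ⟨hd1, hv1, hv2, hadd, hso⟩ :=
      coreBand hmA2 hmD2 h0A2 h0D2 hTA2 hTD2 hinc2 hp1 hpT
    have e1 := hszA2 _ hA1 hAP
    have e2 := hszD2 _ hD1 hDQ
    exact ⟨⟨hA1, hAP, hD1, hDQ⟩, ⟨hAl, hAu, hDl, hDu⟩,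
      by omega, by omega, by omega, by omega, by omega, by omega⟩
  have hpf1 : ∀ p, 1 ≤ p → p ≤ T1 → sl - blkOf capA1 p < m := by
    intro p h1 h2
    obtain ⟨⟨hb1, hbsl, -, -⟩, -, -⟩ := F1 p h1 h2
    omega
  have hpf2 : ∀ p, 1 ≤ p → p ≤ T1 →
      a (sl - blkOf capA1 p + 1) - (p - capA1 (blkOf capA1 p - 1))
        < a (sl - blkOf capA1 p + 1) := by
    intro p h1 h2
    obtain ⟨⟨hb1, hbsl, -, -⟩, ⟨hAl, -, -, -⟩, -, hv1, -, hadd, -, hu⟩ := F1 p h1 h2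
    omega
  have hpf3 : ∀ p, 1 ≤ p → p ≤ T2 → sl + blkOf capA2 p - 1 < m := by
    intro p h1 h2
    obtain ⟨⟨hb1, hbsl, -, -⟩, -, -⟩ := F2 p h1 h2
    omega
  have hpf4 : ∀ p, 1 ≤ p → p ≤ T2 →
      (p - capA2 (blkOf capA2 p - 1)) - 1 < a (sl + blkOf capA2 p - 1 + 1) := by
    intro p h1 h2
    obtain ⟨⟨hb1, hbsl, -, -⟩, ⟨hAl, -, -, -⟩, -, hv1, -, hadd, -, hu⟩ := F2 p h1 h2
    rw [show sl + blkOf capA2 p - 1 + 1 = sl + blkOf capA2 p from by omega]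
    omega
  have hpf5 : ∀ p, 1 ≤ p → p ≤ T1 → rr - blkOf capD1 p < n := by
    intro p h1 h2
    obtain ⟨⟨-, -, hg1, hgQ⟩, -, -⟩ := F1 p h1 h2
    omega
  have hpf6 : ∀ p, 1 ≤ p → p ≤ T1 →
      d (rr - blkOf capD1 p + 1) - vOf capA1 capD1 p < d (rr - blkOf capD1 p + 1) := by
    intro p h1 h2
    obtain ⟨⟨-, -, hg1, hgQ⟩, -, -, hv1, hv2, -⟩ := F1 p h1 h2
    omega
  have hpf7 : ∀ p, 1 ≤ p → p ≤ T2 → rr + blkOf capD2 p - 1 < n := by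
    intro p h1 h2
    obtain ⟨⟨-, -, hg1, hgQ⟩, -, -⟩ := F2 p h1 h2
    omega
  have hpf8 : ∀ p, 1 ≤ p → p ≤ T2 →
      vOf capA2 capD2 p - 1 < d (rr + blkOf capD2 p - 1 + 1) := by
    intro p h1 h2
    obtain ⟨⟨-, -, hg1, hgQ⟩, -, -, hv1, hv2, -⟩ := F2 p h1 h2
    rw [show rr + blkOf capD2 p - 1 + 1 = rr + blkOf capD2 p from by omega]
    omega
  set row : Fin (T1 + T2) → (Σ i : Fin m, Fin (a (i.1 + 1))) := fun k =>
    if h : (k : ℕ) < T1 then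
      ⟨⟨sl - blkOf capA1 ((k:ℕ)+1), hpf1 ((k:ℕ)+1) (by omega) (by omega)⟩,
        ⟨a (sl - blkOf capA1 ((k:ℕ)+1) + 1)
            - (((k:ℕ)+1) - capA1 (blkOf capA1 ((k:ℕ)+1) - 1)),
          hpf2 ((k:ℕ)+1) (by omega) (by omega)⟩⟩
    else
      ⟨⟨sl + blkOf capA2 ((k:ℕ)+1-T1) - 1,
          hpf3 ((k:ℕ)+1-T1) (by omega) (by have := k.2; omega)⟩,
        ⟨(((k:ℕ)+1-T1) - capA2 (blkOf capA2 ((k:ℕ)+1-T1) - 1)) - 1,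
          hpf4 ((k:ℕ)+1-T1) (by omega) (by have := k.2; omega)⟩⟩
    with hrow
  set col : Fin (T1 + T2) → (Σ j : Fin n, Fin (d (j.1 + 1))) := fun k =>
    if h : (k : ℕ) < T1 then
      ⟨⟨rr - blkOf capD1 ((k:ℕ)+1), hpf5 ((k:ℕ)+1) (by omega) (by omega)⟩,
        ⟨d (rr - blkOf capD1 ((k:ℕ)+1) + 1) - vOf capA1 capD1 ((k:ℕ)+1),
          hpf6 ((k:ℕ)+1) (by omega) (by omega)⟩⟩
    else
      ⟨⟨rr + blkOf capD2 ((k:ℕ)+1-T1) - 1,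
          hpf7 ((k:ℕ)+1-T1) (by omega) (by have := k.2; omega)⟩,
        ⟨vOf capA2 capD2 ((k:ℕ)+1-T1) - 1,
          hpf8 ((k:ℕ)+1-T1) (by omega) (by have := k.2; omega)⟩⟩
    with hcol
  set w : Fin (T1 + T2) → ℕ := fun k =>
    if (k : ℕ) < T1 then ordC capA1 capD1 T1 ((k:ℕ)+1)
    else 3*T1 + ordC capA2 capD2 T2 ((k:ℕ)+1-T1)
    with hw
  set σv : ((Fin m × Fin n) × ℕ) → K := fun v =>
    if (v.1.1.1 + 1 ≤ sl ∧ v.1.2.1 + 1 ≤ rr ∧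
        used capA1 capD1 T1 (sl - v.1.1.1) (rr - v.1.2.1) ∧
        so capA1 capD1 (sl - v.1.1.1) (rr - v.1.2.1) + v.2 + d (v.1.2.1 + 1)
          = a (v.1.1.1 + 1))
    then (1:K) else
    if (sl < v.1.1.1 + 1 ∧ rr < v.1.2.1 + 1 ∧
        used capA2 capD2 T2 (v.1.1.1 + 1 - sl) (v.1.2.1 + 1 - rr) ∧
        v.2 = so capA2 capD2 (v.1.1.1 + 1 - sl) (v.1.2.1 + 1 - rr))
    then (1:K) else 0
    with hσv
  apply genPP2_rank_ge K m n a d σv row col w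
  · -- diagonal entries are 1
    intro k
    by_cases hk : (k : ℕ) < T1
    · obtain ⟨⟨hb1, hbsl, hg1, hgQ⟩, ⟨hAl, hAu, hDl, hDu⟩, hda, hv1, hv2, hadd, hso, hu⟩ :=
        F1 ((k:ℕ)+1) (by omega) (by omega)
      simp only [hrow, hcol]
      rw [dif_pos hk, dif_pos hk]
      simp only [bandE]
      rw [if_pos ⟨hda, by omega, by omega⟩]
      simp only [hσv]
      have e1 : sl - (sl - blkOf capA1 ((k:ℕ)+1)) = blkOf capA1 ((k:ℕ)+1) := by omega
      have e2 : rr - (rr - blkOf capD1 ((k:ℕ)+1)) = blkOf capD1 ((k:ℕ)+1) := by omega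
      rw [if_pos]
      refine ⟨by omega, by omega, ?_, ?_⟩
      · rw [e1, e2]
        exact ⟨(k:ℕ)+1, by omega, by omega, rfl, rfl⟩
      · rw [e1, e2]
        omega
    · have hk2 := k.2
      obtain ⟨⟨hb1, hbsl, hg1, hgQ⟩, ⟨hAl, hAu, hDl, hDu⟩, hda, hv1, hv2, hadd, hso, hu⟩ :=
        F2 ((k:ℕ)+1-T1) (by omega) (by omega)
      simp only [hrow, hcol]
      rw [dif_neg hk, dif_neg hk]
      simp only [bandE]
      have eI : sl + blkOf capA2 ((k:ℕ)+1-T1) - 1 + 1 = sl + blkOf capA2 ((k:ℕ)+1-T1) := by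
        omega
      have eJ : rr + blkOf capD2 ((k:ℕ)+1-T1) - 1 + 1 = rr + blkOf capD2 ((k:ℕ)+1-T1) := by
        omega
      rw [if_pos]
      swap
      · rw [eI, eJ]
        exact ⟨hda, by omega, by omega⟩
      simp only [hσv]
      rw [if_neg, if_pos]
      · refine ⟨by omega, by omega, ?_, ?_⟩
        · rw [eI, eJ]
          rw [show sl + blkOf capA2 ((k:ℕ)+1-T1) - sl = blkOf capA2 ((k:ℕ)+1-T1) from by omega,
            show rr + blkOf capD2 ((k:ℕ)+1-T1) - rr = blkOf capD2 ((k:ℕ)+1-T1) from by omega]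
          exact ⟨(k:ℕ)+1-T1, by omega, by omega, rfl, rfl⟩
        · rw [eI, eJ]
          rw [show sl + blkOf capA2 ((k:ℕ)+1-T1) - sl = blkOf capA2 ((k:ℕ)+1-T1) from by omega,
            show rr + blkOf capD2 ((k:ℕ)+1-T1) - rr = blkOf capD2 ((k:ℕ)+1-T1) from by omega]
          omega
      · rintro ⟨h1, -, -⟩
        omega
  · -- triangularity
    intro k k' hne
    by_cases hk : (k : ℕ) < T1
    · by_cases hk' : (k' : ℕ) < T1
      · -- part 1 / part 1
        obtain ⟨⟨hb1, hbsl, hg1, hgQ⟩, ⟨hAl, hAu, hDl, hDu⟩, hda, hv1, hv2, hadd, hso, hu⟩ :=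
          F1 ((k:ℕ)+1) (by omega) (by omega)
        obtain ⟨⟨hb1', hbsl', hg1', hgQ'⟩, ⟨hAl', hAu', hDl', hDu'⟩, hda', hv1', hv2',
          hadd', hso', hu'⟩ := F1 ((k':ℕ)+1) (by omega) (by omega)
        simp only [hrow, hcol] at hne
        rw [dif_pos hk, dif_pos hk'] at hne
        simp only [bandE] at hne
        by_cases hcond : (d (rr - blkOf capD1 ((k':ℕ)+1) + 1)
              ≤ a (sl - blkOf capA1 ((k:ℕ)+1) + 1) ∧
            d (rr - blkOf capD1 ((k':ℕ)+1) + 1) - vOf capA1 capD1 ((k':ℕ)+1)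
              ≤ a (sl - blkOf capA1 ((k:ℕ)+1) + 1)
                - (((k:ℕ)+1) - capA1 (blkOf capA1 ((k:ℕ)+1) - 1)) ∧
            (a (sl - blkOf capA1 ((k:ℕ)+1) + 1)
                - (((k:ℕ)+1) - capA1 (blkOf capA1 ((k:ℕ)+1) - 1)))
              - (d (rr - blkOf capD1 ((k':ℕ)+1) + 1) - vOf capA1 capD1 ((k':ℕ)+1))
              ≤ a (sl - blkOf capA1 ((k:ℕ)+1) + 1) - d (rr - blkOf capD1 ((k':ℕ)+1) + 1))
        swap
        · rw [if_neg hcond] at hne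
          exact absurd rfl hne
        rw [if_pos hcond] at hne
        obtain ⟨hba, hvu, hbw⟩ := hcond
        simp only [hσv] at hne
        have e1 : sl - (sl - blkOf capA1 ((k:ℕ)+1)) = blkOf capA1 ((k:ℕ)+1) := by omega
        have e2 : rr - (rr - blkOf capD1 ((k':ℕ)+1)) = blkOf capD1 ((k':ℕ)+1) := by omega
        by_cases hc1 : (sl - blkOf capA1 ((k:ℕ)+1) + 1 ≤ sl ∧
            rr - blkOf capD1 ((k':ℕ)+1) + 1 ≤ rr ∧
            used capA1 capD1 T1 (sl - (sl - blkOf capA1 ((k:ℕ)+1)))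
              (rr - (rr - blkOf capD1 ((k':ℕ)+1))) ∧
            so capA1 capD1 (sl - (sl - blkOf capA1 ((k:ℕ)+1)))
                (rr - (rr - blkOf capD1 ((k':ℕ)+1)))
              + ((a (sl - blkOf capA1 ((k:ℕ)+1) + 1)
                  - (((k:ℕ)+1) - capA1 (blkOf capA1 ((k:ℕ)+1) - 1)))
                - (d (rr - blkOf capD1 ((k':ℕ)+1) + 1) - vOf capA1 capD1 ((k':ℕ)+1)))
              + d (rr - blkOf capD1 ((k':ℕ)+1) + 1)
              = a (sl - blkOf capA1 ((k:ℕ)+1) + 1))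
        swap
        · rw [if_neg hc1] at hne
          rw [if_neg] at hne
          · exact absurd rfl hne
          · rintro ⟨h1, -, -⟩
            omega
        obtain ⟨-, -, husd, heqn⟩ := hc1
        rw [e1, e2] at husd heqn
        have heq : capA1 (blkOf capA1 ((k:ℕ)+1) - 1) + vOf capA1 capD1 ((k':ℕ)+1)
            + so capA1 capD1 (blkOf capA1 ((k:ℕ)+1)) (blkOf capD1 ((k':ℕ)+1))
            = (k:ℕ)+1 := by
          omega
        rcases coreTri hmA1 hmD1 h0A1 h0D1 hTA1 hTD1 hinc1 (p := (k:ℕ)+1) (p' := (k':ℕ)+1)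
          (by omega) (by omega) (by omega) (by omega) husd heq with hpe | hlt
        · left
          exact Fin.ext (by omega)
        · right
          simp only [hw]
          rw [if_pos hk, if_pos hk']
          exact hlt
      · -- part 1 row, part 2 column: entry is zero
        exfalso
        apply hne
        have hk2 := k'.2
        obtain ⟨⟨hb1, hbsl, hg1, hgQ⟩, -, -⟩ := F1 ((k:ℕ)+1) (by omega) (by omega)
        obtain ⟨⟨hb1', hbsl', hg1', hgQ'⟩, -, -⟩ := F2 ((k':ℕ)+1-T1) (by omega) (by omega)
        simp only [hrow, hcol]
        rw [dif_pos hk, dif_neg hk']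
        simp only [bandE]
        by_cases hcond : (d (rr + blkOf capD2 ((k':ℕ)+1-T1) - 1 + 1)
              ≤ a (sl - blkOf capA1 ((k:ℕ)+1) + 1) ∧
            vOf capA2 capD2 ((k':ℕ)+1-T1) - 1
              ≤ a (sl - blkOf capA1 ((k:ℕ)+1) + 1)
                - (((k:ℕ)+1) - capA1 (blkOf capA1 ((k:ℕ)+1) - 1)) ∧
            (a (sl - blkOf capA1 ((k:ℕ)+1) + 1)
                - (((k:ℕ)+1) - capA1 (blkOf capA1 ((k:ℕ)+1) - 1)))
              - (vOf capA2 capD2 ((k':ℕ)+1-T1) - 1)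
              ≤ a (sl - blkOf capA1 ((k:ℕ)+1) + 1)
                - d (rr + blkOf capD2 ((k':ℕ)+1-T1) - 1 + 1))
        · rw [if_pos hcond]
          simp only [hσv]
          rw [if_neg (by rintro ⟨-, h2, -, -⟩; omega),
            if_neg (by rintro ⟨h1, -, -, -⟩; omega)]
        · rw [if_neg hcond]
    · by_cases hk' : (k' : ℕ) < T1
      · -- part 2 row, part 1 column: entry is zero
        exfalso
        apply hne
        have hk2 := k.2
        obtain ⟨⟨hb1, hbsl, hg1, hgQ⟩, -, -⟩ := F2 ((k:ℕ)+1-T1) (by omega) (by omega)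
        obtain ⟨⟨hb1', hbsl', hg1', hgQ'⟩, -, -⟩ := F1 ((k':ℕ)+1) (by omega) (by omega)
        simp only [hrow, hcol]
        rw [dif_neg hk, dif_pos hk']
        simp only [bandE]
        by_cases hcond : (d (rr - blkOf capD1 ((k':ℕ)+1) + 1)
              ≤ a (sl + blkOf capA2 ((k:ℕ)+1-T1) - 1 + 1) ∧
            d (rr - blkOf capD1 ((k':ℕ)+1) + 1) - vOf capA1 capD1 ((k':ℕ)+1)
              ≤ (((k:ℕ)+1-T1) - capA2 (blkOf capA2 ((k:ℕ)+1-T1) - 1)) - 1 ∧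
            ((((k:ℕ)+1-T1) - capA2 (blkOf capA2 ((k:ℕ)+1-T1) - 1)) - 1)
              - (d (rr - blkOf capD1 ((k':ℕ)+1) + 1) - vOf capA1 capD1 ((k':ℕ)+1))
              ≤ a (sl + blkOf capA2 ((k:ℕ)+1-T1) - 1 + 1)
                - d (rr - blkOf capD1 ((k':ℕ)+1) + 1))
        · rw [if_pos hcond]
          simp only [hσv]
          rw [if_neg (by rintro ⟨h1, -, -, -⟩; omega),
            if_neg (by rintro ⟨-, h2, -, -⟩; omega)]
        · rw [if_neg hcond]
      · -- part 2 / part 2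
        have hk2 := k.2
        have hk2' := k'.2
        obtain ⟨⟨hb1, hbsl, hg1, hgQ⟩, ⟨hAl, hAu, hDl, hDu⟩, hda, hv1, hv2, hadd, hso, hu⟩ :=
          F2 ((k:ℕ)+1-T1) (by omega) (by omega)
        obtain ⟨⟨hb1', hbsl', hg1', hgQ'⟩, ⟨hAl', hAu', hDl', hDu'⟩, hda', hv1', hv2',
          hadd', hso', hu'⟩ := F2 ((k':ℕ)+1-T1) (by omega) (by omega)
        simp only [hrow, hcol] at hne
        rw [dif_neg hk, dif_neg hk'] at hne
        simp only [bandE] at hne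
        by_cases hcond : (d (rr + blkOf capD2 ((k':ℕ)+1-T1) - 1 + 1)
              ≤ a (sl + blkOf capA2 ((k:ℕ)+1-T1) - 1 + 1) ∧
            vOf capA2 capD2 ((k':ℕ)+1-T1) - 1
              ≤ (((k:ℕ)+1-T1) - capA2 (blkOf capA2 ((k:ℕ)+1-T1) - 1)) - 1 ∧
            ((((k:ℕ)+1-T1) - capA2 (blkOf capA2 ((k:ℕ)+1-T1) - 1)) - 1)
              - (vOf capA2 capD2 ((k':ℕ)+1-T1) - 1)
              ≤ a (sl + blkOf capA2 ((k:ℕ)+1-T1) - 1 + 1)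
                - d (rr + blkOf capD2 ((k':ℕ)+1-T1) - 1 + 1))
        swap
        · rw [if_neg hcond] at hne
          exact absurd rfl hne
        rw [if_pos hcond] at hne
        obtain ⟨hba, hvu, hbw⟩ := hcond
        rw [show sl + blkOf capA2 ((k:ℕ)+1-T1) - 1 + 1 = sl + blkOf capA2 ((k:ℕ)+1-T1)
          from by omega] at hba hbw
        rw [show rr + blkOf capD2 ((k':ℕ)+1-T1) - 1 + 1 = rr + blkOf capD2 ((k':ℕ)+1-T1)
          from by omega] at hba hbw
        simp only [hσv] at hne
        by_cases hc1 : (sl + blkOf capA2 ((k:ℕ)+1-T1) - 1 + 1 ≤ sl ∧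
            rr + blkOf capD2 ((k':ℕ)+1-T1) - 1 + 1 ≤ rr ∧
            used capA1 capD1 T1 (sl - (sl + blkOf capA2 ((k:ℕ)+1-T1) - 1))
              (rr - (rr + blkOf capD2 ((k':ℕ)+1-T1) - 1)) ∧
            so capA1 capD1 (sl - (sl + blkOf capA2 ((k:ℕ)+1-T1) - 1))
                (rr - (rr + blkOf capD2 ((k':ℕ)+1-T1) - 1))
              + (((((k:ℕ)+1-T1) - capA2 (blkOf capA2 ((k:ℕ)+1-T1) - 1)) - 1)
                - (vOf capA2 capD2 ((k':ℕ)+1-T1) - 1))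
              + d (rr + blkOf capD2 ((k':ℕ)+1-T1) - 1 + 1)
              = a (sl + blkOf capA2 ((k:ℕ)+1-T1) - 1 + 1))
        · obtain ⟨h1, -, -⟩ := hc1
          omega
        rw [if_neg hc1] at hne
        by_cases hc2 : (sl < sl + blkOf capA2 ((k:ℕ)+1-T1) - 1 + 1 ∧
            rr < rr + blkOf capD2 ((k':ℕ)+1-T1) - 1 + 1 ∧
            used capA2 capD2 T2 (sl + blkOf capA2 ((k:ℕ)+1-T1) - 1 + 1 - sl)
              (rr + blkOf capD2 ((k':ℕ)+1-T1) - 1 + 1 - rr) ∧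
            ((((k:ℕ)+1-T1) - capA2 (blkOf capA2 ((k:ℕ)+1-T1) - 1)) - 1)
                - (vOf capA2 capD2 ((k':ℕ)+1-T1) - 1)
              = so capA2 capD2 (sl + blkOf capA2 ((k:ℕ)+1-T1) - 1 + 1 - sl)
                (rr + blkOf capD2 ((k':ℕ)+1-T1) - 1 + 1 - rr))
        swap
        · rw [if_neg hc2] at hne
          exact absurd rfl hne
        obtain ⟨-, -, husd, heqn⟩ := hc2
        rw [show sl + blkOf capA2 ((k:ℕ)+1-T1) - 1 + 1 - sl = blkOf capA2 ((k:ℕ)+1-T1)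
          from by omega] at husd heqn
        rw [show rr + blkOf capD2 ((k':ℕ)+1-T1) - 1 + 1 - rr = blkOf capD2 ((k':ℕ)+1-T1)
          from by omega] at husd heqn
        have heq : capA2 (blkOf capA2 ((k:ℕ)+1-T1) - 1) + vOf capA2 capD2 ((k':ℕ)+1-T1)
            + so capA2 capD2 (blkOf capA2 ((k:ℕ)+1-T1)) (blkOf capD2 ((k':ℕ)+1-T1))
            = (k:ℕ)+1-T1 := by
          omega
        rcases coreTri hmA2 hmD2 h0A2 h0D2 hTA2 hTD2 hinc2 (p := (k:ℕ)+1-T1)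
          (p' := (k':ℕ)+1-T1) (by omega) (by omega) (by omega) (by omega) husd heq
          with hpe | hlt
        · left
          exact Fin.ext (by omega)
        · right
          simp only [hw]
          rw [if_neg hk, if_neg hk']
          omega

end lower

section mainsums

lemma sum_Ioc_diff (f : ℕ → ℕ) {x y : ℕ} (h : x < y) :
    ∑ j ∈ Finset.Ioc x y, f j = f (x+1) + ∑ j ∈ Finset.Ioc (x+1) y, f j := by
  rw [← Finset.sum_Ioc_consecutive f (show x ≤ x+1 by omega) (show x+1 ≤ y by omega)]
  congr 1
  rw [Nat.Ioc_succ_singleton, Finset.sum_singleton]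

lemma sum_Ioc_split (f : ℕ → ℕ) {x y z : ℕ} (h1 : x ≤ y) (h2 : y ≤ z) :
    ∑ j ∈ Finset.Ioc x z, f j
      = (∑ j ∈ Finset.Ioc x y, f j) + ∑ j ∈ Finset.Ioc y z, f j :=
  (Finset.sum_Ioc_consecutive f h1 h2).symm

end mainsums


open KroneckerCore in
set_option maxHeartbeats 1000000 in
/-- Proposition 4: rank of the generic matrix `φ^{PP2}`.
Here `a 1 ≥ ⋯ ≥ a m ≥ 1` and `d 1 ≥ ⋯ ≥ d n ≥ 1` (extended by `0` outside), and the
indices `r l`, `s l` are defined by the recursion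
`r l = max{ j ≤ n : d j > a (s (l-1) + 1) }`, `s l = max{ i ≤ m : d (r l + 1) ≤ a i }`
(undefined maxima are `0`), `t` being minimal with `r t = n`. -/
theorem rank_genPP2 (K : Type*) [Field K] (m n : ℕ) (a d : ℕ → ℕ)
    (ha_pos : ∀ j, 1 ≤ j → j ≤ m → 1 ≤ a j)
    (ha_mono : ∀ i j, 1 ≤ i → i ≤ j → j ≤ m → a j ≤ a i)
    (ha_zero : ∀ j, m < j → a j = 0)
    (hd_pos : ∀ j, 1 ≤ j → j ≤ n → 1 ≤ d j)
    (hd_mono : ∀ i j, 1 ≤ i → i ≤ j → j ≤ n → d j ≤ d i)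
    (hd_zero : ∀ j, n < j → d j = 0)
    (r s : ℕ → ℕ) (hs0 : s 0 = 0)
    (hr : ∀ l, 1 ≤ l → r l =
      ((Finset.Icc 1 n).filter (fun j => a (s (l - 1) + 1) < d j)).sup id)
    (hs : ∀ l, 1 ≤ l → s l =
      ((Finset.Icc 1 m).filter (fun i => d (r l + 1) ≤ a i)).sup id)
    (t : ℕ) (ht1 : 1 ≤ t) (htr : r t = n) (htmin : ∀ l, 1 ≤ l → l < t → r l ≠ n) :
    (genPP2 K m n a d).rank =
      Finset.inf' (Finset.range t) (by simp; omega)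
        (fun i => (∑ j ∈ Finset.Icc 1 (s i), a j) +
          ∑ j ∈ Finset.Icc (r (i + 1) + 1) (r t), d j) := by
  classical
  have ha_anti : ∀ x y, 1 ≤ x → x ≤ y → a y ≤ a x := by
    intro x y hx hxy
    by_cases hy : y ≤ m
    · exact ha_mono x y hx hxy hy
    · rw [ha_zero y (by omega)]; omega
  have hd_anti : ∀ x y, 1 ≤ x → x ≤ y → d y ≤ d x := by
    intro x y hx hxy
    by_cases hy : y ≤ n
    · exact hd_mono x y hx hxy hy
    · rw [hd_zero y (by omega)]; omega
  have hrle : ∀ l, 1 ≤ l → r l ≤ n := by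
    intro l hl
    rw [hr l hl]
    apply Finset.sup_le
    intro j hj
    have := (Finset.mem_Icc.1 (Finset.mem_filter.1 hj).1).2
    simpa using this
  have hsle : ∀ l, s l ≤ m := by
    intro l
    rcases Nat.eq_zero_or_pos l with h0 | hpos
    · subst h0; rw [hs0]; omega
    · rw [hs l hpos]
      apply Finset.sup_le
      intro i hi
      have := (Finset.mem_Icc.1 (Finset.mem_filter.1 hi).1).2
      simpa using this
  have hrmem : ∀ l, 1 ≤ l → 1 ≤ r l → a (s (l-1) + 1) < d (r l) := by
    intro l hl hrl
    have h1 : 1 ≤ ((Finset.Icc 1 n).filter (fun j => a (s (l - 1) + 1) < d j)).sup id := by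
      rw [← hr l hl]; exact hrl
    have h2 := sup_mem_of_pos h1
    rw [← hr l hl] at h2
    exact (Finset.mem_filter.1 h2).2
  have hsmem : ∀ l, 1 ≤ l → 1 ≤ s l → d (r l + 1) ≤ a (s l) := by
    intro l hl hsl
    have h1 : 1 ≤ ((Finset.Icc 1 m).filter (fun i => d (r l + 1) ≤ a i)).sup id := by
      rw [← hs l hl]; exact hsl
    have h2 := sup_mem_of_pos h1
    rw [← hs l hl] at h2
    exact (Finset.mem_filter.1 h2).2
  have hstep : ∀ l, 1 ≤ l → s (l - 1) ≤ s l ∧ r l ≤ r (l + 1) := by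
    intro l hl
    induction l with
    | zero => omega
    | succ lp ih =>
      have hQ : s lp ≤ s (lp + 1) := by
        rcases Nat.eq_zero_or_pos lp with h0 | hpos
        · subst h0; rw [hs0]; omega
        · have hih := (ih hpos).2
          rw [hs lp hpos, hs (lp+1) (by omega)]
          apply Finset.sup_mono
          intro i hi
          simp only [Finset.mem_filter] at hi ⊢
          exact ⟨hi.1, le_trans (hd_anti (r lp + 1) (r (lp+1) + 1) (by omega) (by omega)) hi.2⟩
      refine ⟨by simpa using hQ, ?_⟩
      rw [hr (lp+1) (by omega), hr (lp+2) (by omega)]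
      apply Finset.sup_mono
      intro j hj
      simp only [Finset.mem_filter, Nat.add_sub_cancel] at hj ⊢
      have : a (s (lp+1) + 1) ≤ a (s lp + 1) := ha_anti _ _ (by omega) (by omega)
      refine ⟨hj.1, ?_⟩
      show a (s (lp+1) + 1) < d j
      omega
  have smono : ∀ u v, u ≤ v → s u ≤ s v := by
    intro u v huv
    induction v with
    | zero => have : u = 0 := by omega
              subst this; exact le_rfl
    | succ vp ih =>
      rcases Nat.lt_or_ge u (vp + 1) with h | h
      · have h2 := (hstep (vp+1) (by omega)).1
        simp only [Nat.add_sub_cancel] at h2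
        exact le_trans (ih (by omega)) h2
      · have : u = vp + 1 := by omega
        subst this; exact le_rfl
  have rmono : ∀ u v, 1 ≤ u → u ≤ v → r u ≤ r v := by
    intro u v hu huv
    induction v with
    | zero => omega
    | succ vp ih =>
      rcases Nat.lt_or_ge u (vp + 1) with h | h
      · exact le_trans (ih (by omega)) (hstep vp (by omega)).2
      · have : u = vp + 1 := by omega
        subst this; exact le_rfl
  have hterm : ∀ i, ((∑ j ∈ Finset.Icc 1 (s i), a j) +
      ∑ j ∈ Finset.Icc (r (i + 1) + 1) (r t), d j)
      = (∑ j ∈ Finset.Ioc 0 (s i), a j) + ∑ j ∈ Finset.Ioc (r (i+1)) n, d j := by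
    intro i
    have e1 : Finset.Icc 1 (s i) = Finset.Ioc 0 (s i) := Finset.Icc_add_one_left_eq_Ioc 0 (s i)
    have e2 : Finset.Icc (r (i+1) + 1) n = Finset.Ioc (r (i+1)) n :=
      Finset.Icc_add_one_left_eq_Ioc _ _
    rw [htr, e1, e2]
  apply le_antisymm
  · -- upper bound
    apply Finset.le_inf'
    intro l hl
    have hlt : l < t := Finset.mem_range.1 hl
    rw [hterm l]
    apply genPP2_rank_le K m n a d (s l) (r (l+1)) (hsle l) (hrle (l+1) (by omega))
    intro I J hI1 hI2 hJ1 hJ2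
    have h1 : a I ≤ a (s l + 1) := ha_anti _ _ (by omega) (by omega)
    have h2 : a (s l + 1) < d (r (l+1)) := by
      have := hrmem (l+1) (by omega) (by omega)
      simpa using this
    have h3 : d (r (l+1)) ≤ d J := hd_anti J (r (l+1)) (by omega) hJ2
    omega
  · -- lower bound
    obtain ⟨l0, hl0, hmin⟩ := Finset.exists_mem_eq_inf'
      (⟨0, Finset.mem_range.2 (by omega)⟩ : (Finset.range t).Nonempty)
      (fun i => (∑ j ∈ Finset.Icc 1 (s i), a j) +
        ∑ j ∈ Finset.Icc (r (i + 1) + 1) (r t), d j)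
    have hl0t : l0 < t := Finset.mem_range.1 hl0
    rw [hmin, hterm l0]
    have hall : ∀ k, k < t → (∑ j ∈ Finset.Ioc 0 (s l0), a j) +
        (∑ j ∈ Finset.Ioc (r (l0+1)) n, d j) ≤
        (∑ j ∈ Finset.Ioc 0 (s k), a j) + ∑ j ∈ Finset.Ioc (r (k+1)) n, d j := by
      intro k hk
      have h1 := Finset.inf'_le
        (fun i => (∑ j ∈ Finset.Icc 1 (s i), a j) +
          ∑ j ∈ Finset.Icc (r (i + 1) + 1) (r t), d j) (Finset.mem_range.2 hk)
      rw [hmin, hterm l0, hterm k] at h1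
      exact h1
    set capA1 : ℕ → ℕ := fun b => ∑ j ∈ Finset.Ioc (s l0 - b) (s l0), a j with hcapA1
    set capD1 : ℕ → ℕ := fun g => ∑ j ∈ Finset.Ioc (r (l0+1) - g) (r (l0+1)), d j with hcapD1
    set capA2 : ℕ → ℕ := fun i => ∑ j ∈ Finset.Ioc (s l0) (s l0 + i), a j with hcapA2
    set capD2 : ℕ → ℕ := fun q => ∑ j ∈ Finset.Ioc (r (l0+1)) (r (l0+1) + q), d j with hcapD2
    have hrrn : r (l0+1) ≤ n := hrle (l0+1) (by omega)
    have hr1rr : r 1 ≤ r (l0+1) := rmono 1 (l0+1) le_rfl (by omega)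
    have hszA1' : ∀ b, 1 ≤ b → b ≤ s l0 → capA1 b - capA1 (b-1) = a (s l0 - b + 1) := by
      intro b h1 h2
      simp only [hcapA1]
      rw [show s l0 - (b-1) = s l0 - b + 1 from by omega,
        sum_Ioc_diff a (show s l0 - b < s l0 from by omega)]
      omega
    have hszD1' : ∀ g, 1 ≤ g → g ≤ r (l0+1) - r 1 →
        capD1 g - capD1 (g-1) = d (r (l0+1) - g + 1) := by
      intro g h1 h2
      simp only [hcapD1]
      rw [show r (l0+1) - (g-1) = r (l0+1) - g + 1 from by omega,
        sum_Ioc_diff d (show r (l0+1) - g < r (l0+1) from by omega)]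
      omega
    have hszA2' : ∀ i, 1 ≤ i → capA2 i - capA2 (i-1) = a (s l0 + i) := by
      intro i h1
      simp only [hcapA2]
      rw [show s l0 + i = s l0 + (i-1) + 1 from by omega,
        Finset.sum_Ioc_succ_top (show s l0 ≤ s l0 + (i-1) from by omega)]
      omega
    have hszD2' : ∀ q, 1 ≤ q → capD2 q - capD2 (q-1) = d (r (l0+1) + q) := by
      intro q h1
      simp only [hcapD2]
      rw [show r (l0+1) + q = r (l0+1) + (q-1) + 1 from by omega,
        Finset.sum_Ioc_succ_top (show r (l0+1) ≤ r (l0+1) + (q-1) from by omega)]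
      omega
    have hmA1' : Monotone capA1 := by
      intro x y hxy
      simp only [hcapA1]
      exact Finset.sum_le_sum_of_subset (Finset.Ioc_subset_Ioc (by omega) le_rfl)
    have hmD1' : Monotone capD1 := by
      intro x y hxy
      simp only [hcapD1]
      exact Finset.sum_le_sum_of_subset (Finset.Ioc_subset_Ioc (by omega) le_rfl)
    have hmA2' : Monotone capA2 := by
      intro x y hxy
      simp only [hcapA2]
      exact Finset.sum_le_sum_of_subset (Finset.Ioc_subset_Ioc le_rfl (by omega))
    have hmD2' : Monotone capD2 := by
      intro x y hxy
      simp only [hcapD2]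
      exact Finset.sum_le_sum_of_subset (Finset.Ioc_subset_Ioc le_rfl (by omega))
    apply lower_main K m n a d (s l0) (r (l0+1))
      (∑ j ∈ Finset.Ioc 0 (s l0), a j) (∑ j ∈ Finset.Ioc (r (l0+1)) n, d j)
      (r (l0+1) - r 1) (hsle l0) hrrn (by omega) capA1 capD1 capA2 capD2
      hmA1' hmD1' (by simp [hcapA1]) (by simp [hcapD1])
      (le_of_eq (by simp only [hcapA1]; rw [Nat.sub_self]))
      ?hTD1 ?hinc1
      hmA2' hmD2' (by simp [hcapA2]) (by simp [hcapD2])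
      ?hTA2
      (le_of_eq (by simp only [hcapD2]; rw [Nat.add_sub_cancel' hrrn]))
      ?hinc2
      hszA1' hszD1' (fun i h1 _ => hszA2' i h1) (fun q h1 _ => hszD2' q h1)
    case hTD1 =>
      simp only [hcapD1]
      rw [show r (l0+1) - (r (l0+1) - r 1) = r 1 from by omega]
      have h2 := hall 0 (by omega)
      rw [hs0] at h2
      simp only [Finset.Ioc_self, Finset.sum_empty, zero_add] at h2
      have h3 := sum_Ioc_split d hr1rr hrrn
      omega
    case hTA2 =>
      simp only [hcapA2]
      rw [Nat.add_sub_cancel' (hsle l0)]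
      have h2 := hall (t-1) (by omega)
      rw [show t - 1 + 1 = t from by omega, htr] at h2
      simp only [Finset.Ioc_self, Finset.sum_empty, add_zero] at h2
      have hss : s l0 ≤ s (t-1) := smono _ _ (by omega)
      have h3 := sum_Ioc_split a (Nat.zero_le (s l0)) hss
      have h4 : (∑ j ∈ Finset.Ioc (s l0) (s (t-1)), a j) ≤ ∑ j ∈ Finset.Ioc (s l0) m, a j :=
        Finset.sum_le_sum_of_subset (Finset.Ioc_subset_Ioc le_rfl (hsle (t-1)))
      omega
    case hinc1 =>
      intro b g hb1 hbP hg1 hgQ hCt hCA hAD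
      have hl0pos : 1 ≤ l0 := by
        by_contra hc
        have hz : s l0 = 0 := by
          have : l0 = 0 := by omega
          rw [this, hs0]
        omega
      set Kt := ((Finset.Icc 1 l0).filter (fun k' => s (k'-1) < s l0 + 1 - b)).sup id
        with hKt
      have hmemK : 1 ∈ (Finset.Icc 1 l0).filter (fun k' => s (k'-1) < s l0 + 1 - b) := by
        rw [Finset.mem_filter, Finset.mem_Icc]
        refine ⟨⟨le_rfl, hl0pos⟩, ?_⟩
        simp only [Nat.sub_self]
        rw [hs0]
        omega
      have hK1 : 1 ≤ Kt := by
        have := Finset.le_sup (f := id) hmemK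
        rw [← hKt] at this
        simpa using this
      have hKmem : Kt ∈ (Finset.Icc 1 l0).filter (fun k' => s (k'-1) < s l0 + 1 - b) := by
        rw [hKt]
        exact sup_mem_of_pos (by rw [← hKt]; exact hK1)
      rw [Finset.mem_filter, Finset.mem_Icc] at hKmem
      obtain ⟨⟨hKl, hKu⟩, hKs⟩ := hKmem
      have hup : s l0 + 1 - b ≤ s Kt := by
        rcases Nat.lt_or_ge Kt l0 with h | h
        · by_contra hc
          push_neg at hc
          have hmem2 : Kt + 1 ∈ (Finset.Icc 1 l0).filter
              (fun k' => s (k'-1) < s l0 + 1 - b) := by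
            rw [Finset.mem_filter, Finset.mem_Icc]
            refine ⟨⟨by omega, by omega⟩, ?_⟩
            simp only [Nat.add_sub_cancel]
            omega
          have := Finset.le_sup (f := id) hmem2
          rw [← hKt] at this
          simp only [id] at this
          omega
        · have hKeq : Kt = l0 := by omega
          rw [hKeq]
          omega
      -- capA1 b ≤ sum over Ioc (s (Kt-1)) (s l0)
      have hsK1sl : s (Kt - 1) ≤ s l0 := smono _ _ (by omega)
      have hA1le : capA1 b ≤ ∑ j ∈ Finset.Ioc (s (Kt-1)) (s l0), a j := by
        simp only [hcapA1]
        exact Finset.sum_le_sum_of_subset (Finset.Ioc_subset_Ioc (by omega) le_rfl)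
      have h2 := hall (Kt-1) (by omega)
      rw [show Kt - 1 + 1 = Kt from by omega] at h2
      have hrKrr : r Kt ≤ r (l0+1) := rmono _ _ (by omega) (by omega)
      have hsplA := sum_Ioc_split a (Nat.zero_le (s (Kt-1))) hsK1sl
      have hsplD := sum_Ioc_split d hrKrr hrrn
      have h3 : (∑ j ∈ Finset.Ioc (s (Kt-1)) (s l0), a j)
          ≤ ∑ j ∈ Finset.Ioc (r Kt) (r (l0+1)), d j := by omega
      have h4 : g ≤ r (l0+1) - r Kt := by
        by_contra hc
        push_neg at hc
        have h5 : capD1 (r (l0+1) - r Kt) ≤ capD1 (g - 1) := hmD1' (by omega)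
        have h6 : capD1 (r (l0+1) - r Kt) = ∑ j ∈ Finset.Ioc (r Kt) (r (l0+1)), d j := by
          simp only [hcapD1]
          rw [show r (l0+1) - (r (l0+1) - r Kt) = r Kt from by omega]
        omega
      have hsK1 : 1 ≤ s Kt := by omega
      have h6 : d (r (l0+1) - g + 1) ≤ d (r Kt + 1) := hd_anti _ _ (by omega) (by omega)
      have h7 : d (r Kt + 1) ≤ a (s Kt) := hsmem Kt (by omega) hsK1
      have h8 : a (s Kt) ≤ a (s l0 - b + 1) := ha_anti _ _ (by omega) (by omega)
      rw [hszA1' b hb1 hbP, hszD1' g hg1 hgQ]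
      omega
    case hinc2 =>
      intro i q hi1 hiP hq1 hqQ hCt hCA hAD
      have hl0t1 : l0 + 1 ≤ t - 1 := by
        rcases Nat.lt_or_ge (l0+1) t with h | h
        · omega
        · exfalso
          have he : l0 + 1 = t := by omega
          have : r (l0+1) = n := by rw [he, htr]
          omega
      set Kt := ((Finset.Icc (l0+1) (t-1)).filter
        (fun k' => r k' < r (l0+1) + q)).sup id with hKt
      have hmemK : l0 + 1 ∈ (Finset.Icc (l0+1) (t-1)).filter
          (fun k' => r k' < r (l0+1) + q) := by
        rw [Finset.mem_filter, Finset.mem_Icc]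
        exact ⟨⟨le_rfl, hl0t1⟩, by omega⟩
      have hK1 : l0 + 1 ≤ Kt := by
        have := Finset.le_sup (f := id) hmemK
        rw [← hKt] at this
        simpa using this
      have hKmem : Kt ∈ (Finset.Icc (l0+1) (t-1)).filter
          (fun k' => r k' < r (l0+1) + q) := by
        rw [hKt]
        exact sup_mem_of_pos (by rw [← hKt]; omega)
      rw [Finset.mem_filter, Finset.mem_Icc] at hKmem
      obtain ⟨⟨hKl, hKu⟩, hKr⟩ := hKmem
      have hup : r (l0+1) + q ≤ r (Kt + 1) := by
        rcases Nat.lt_or_ge Kt (t-1) with h | h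
        · by_contra hc
          push_neg at hc
          have hmem2 : Kt + 1 ∈ (Finset.Icc (l0+1) (t-1)).filter
              (fun k' => r k' < r (l0+1) + q) := by
            rw [Finset.mem_filter, Finset.mem_Icc]
            exact ⟨⟨by omega, by omega⟩, hc⟩
          have := Finset.le_sup (f := id) hmem2
          rw [← hKt] at this
          simp only [id] at this
          omega
        · have hKeq : Kt = t - 1 := by omega
          rw [hKeq, show t - 1 + 1 = t from by omega, htr]
          omega
      have h1 : capD2 q ≤ ∑ j ∈ Finset.Ioc (r (l0+1)) (r (Kt+1)), d j := by
        simp only [hcapD2]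
        exact Finset.sum_le_sum_of_subset (Finset.Ioc_subset_Ioc le_rfl hup)
      have h2 := hall Kt (by omega)
      have hrK : r (l0+1) ≤ r (Kt + 1) := rmono _ _ (by omega) (by omega)
      have hrKn : r (Kt+1) ≤ n := hrle (Kt+1) (by omega)
      have hsplD := sum_Ioc_split d hrK hrKn
      have hssl : s l0 ≤ s Kt := smono _ _ (by omega)
      have hsplA := sum_Ioc_split a (Nat.zero_le (s l0)) hssl
      have h5 : s l0 + i ≤ s Kt := by
        by_contra hc
        push_neg at hc
        have h5a : capA2 (s Kt - s l0) ≤ capA2 (i - 1) := hmA2' (by omega)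
        have h5b : capA2 (s Kt - s l0) = ∑ j ∈ Finset.Ioc (s l0) (s Kt), a j := by
          simp only [hcapA2]
          rw [show s l0 + (s Kt - s l0) = s Kt from by omega]
        omega
      have h6 : d (r (l0+1) + q) ≤ d (r Kt + 1) := hd_anti _ _ (by omega) (by omega)
      have h7 : d (r Kt + 1) ≤ a (s Kt) := hsmem Kt (by omega) (by omega)
      have h8 : a (s Kt) ≤ a (s l0 + i) := ha_anti _ _ (by omega) (by omega)
      rw [hszA2' i hi1, hszD2' q hq1]
      omega
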